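/- Let E be a real inner product space, ε > 0 and σ > 0. The Moreau–Yosida regularization h_{ε,σ} is (Fréchet) differentiable at every point R ∈ E, and its gradient there equals H_{ε,σ}(R), i.e. the gradient is R/ε when ‖R‖ ≤ εσ and σ R/‖R‖ when ‖R‖ > εσ. In particular the regularized dissipation potential is smooth, which is the purpose of the regularization (3.1). -/

import Mathlib

open Real

section Aux

variable {E : Type*} [NormedAddCommGroup E] [InnerProductSpace ℝ E]

/-- The scalar Huber-type function. -/
private noncomputable def phiMY (ε σ : ℝ) (r : ℝ) : ℝ :=
  if r ≤ ε * σ then r ^ 2 / (2 * ε) else σ * r - ε * σ ^ 2 / 2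

private lemma phiMY_le (ε σ : ℝ) (hε : 0 < ε) (hσ : 0 < σ) (x S : E) :
    phiMY ε σ ‖x‖ ≤ σ * ‖S‖ + ‖S - x‖ ^ 2 / (2 * ε) := by
  have h1 : |‖x‖ - ‖S‖| ≤ ‖S - x‖ := by
    have := abs_norm_sub_norm_le x S
    rwa [norm_sub_rev] at this
  have h2 : (‖x‖ - ‖S‖) ^ 2 ≤ ‖S - x‖ ^ 2 := by
    nlinarith [sq_abs (‖x‖ - ‖S‖), abs_nonneg (‖x‖ - ‖S‖), norm_nonneg (S - x)]
  have hS := norm_nonneg S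
  have hmid : σ * ‖S‖ + (‖x‖ - ‖S‖) ^ 2 / (2 * ε) ≤ σ * ‖S‖ + ‖S - x‖ ^ 2 / (2 * ε) := by
    gcongr
  refine le_trans ?_ hmid
  unfold phiMY
  rcases le_or_gt ‖x‖ (ε * σ) with h | h
  · rw [if_pos h, ← sub_nonneg]
    have heq : σ * ‖S‖ + (‖x‖ - ‖S‖) ^ 2 / (2 * ε) - ‖x‖ ^ 2 / (2 * ε)
        = ‖S‖ * (2 * ε * σ + ‖S‖ - 2 * ‖x‖) / (2 * ε) := by field_simp; ring
    rw [heq]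
    apply div_nonneg _ (by positivity)
    apply mul_nonneg hS
    linarith
  · rw [if_neg (not_le.mpr h), ← sub_nonneg]
    have heq : σ * ‖S‖ + (‖x‖ - ‖S‖) ^ 2 / (2 * ε) - (σ * ‖x‖ - ε * σ ^ 2 / 2)
        = (‖x‖ - ‖S‖ - ε * σ) ^ 2 / (2 * ε) := by field_simp; ring
    rw [heq]
    positivity

private lemma iInf_eq_phiMY (ε σ : ℝ) (hε : 0 < ε) (hσ : 0 < σ) (x : E) :
    (⨅ S : E, (σ * ‖S‖ + ‖S - x‖ ^ 2 / (2 * ε))) = phiMY ε σ ‖x‖ := by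
  have hbdd : BddBelow (Set.range fun S : E => σ * ‖S‖ + ‖S - x‖ ^ 2 / (2 * ε)) :=
    ⟨phiMY ε σ ‖x‖, by rintro _ ⟨S, rfl⟩; exact phiMY_le ε σ hε hσ x S⟩
  refine le_antisymm ?_ (le_ciInf (phiMY_le ε σ hε hσ x))
  by_cases h : ‖x‖ ≤ ε * σ
  · calc (⨅ S : E, (σ * ‖S‖ + ‖S - x‖ ^ 2 / (2 * ε)))
        ≤ σ * ‖(0 : E)‖ + ‖(0 : E) - x‖ ^ 2 / (2 * ε) := ciInf_le hbdd (0 : E)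
      _ = phiMY ε σ ‖x‖ := by
          simp [phiMY, h]
  · push_neg at h
    have hrpos : (0 : ℝ) < ‖x‖ := lt_trans (by positivity) h
    set c : ℝ := 1 - ε * σ / ‖x‖ with hc
    have hc0 : 0 ≤ c := by
      have : ε * σ / ‖x‖ ≤ 1 := (div_le_one hrpos).mpr h.le
      rw [hc]; linarith
    have h1 : ‖c • x‖ = ‖x‖ - ε * σ := by
      rw [norm_smul, Real.norm_eq_abs, abs_of_nonneg hc0, hc, sub_mul, one_mul,
        div_mul_cancel₀ _ hrpos.ne']
    have h2 : ‖c • x - x‖ = ε * σ := by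
      have he : c • x - x = (c - 1) • x := by module
      have he2 : c - 1 = -(ε * σ / ‖x‖) := by rw [hc]; ring
      rw [he, norm_smul, Real.norm_eq_abs, he2, abs_neg, abs_of_nonneg (by positivity),
        div_mul_cancel₀ _ hrpos.ne']
    calc (⨅ S : E, (σ * ‖S‖ + ‖S - x‖ ^ 2 / (2 * ε)))
        ≤ σ * ‖c • x‖ + ‖c • x - x‖ ^ 2 / (2 * ε) := ciInf_le hbdd (c • x)
      _ = phiMY ε σ ‖x‖ := by
          rw [h1, h2, phiMY, if_neg (not_le.mpr h)]
          field_simp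
          ring

private lemma phiMY_bound (ε σ : ℝ) (hε : 0 < ε) (hσ : 0 < σ) {r₀ : ℝ} (hr : ε * σ ≤ r₀)
    (t : ℝ) : |phiMY ε σ t - phiMY ε σ r₀ - σ * (t - r₀)| ≤ (t - r₀) ^ 2 / (2 * ε) := by
  unfold phiMY
  rcases le_or_gt t (ε * σ) with ht | ht <;> rcases le_or_gt r₀ (ε * σ) with hr' | hr'
  · have hr0 : r₀ = ε * σ := le_antisymm hr' hr
    subst hr0
    rw [if_pos ht, if_pos le_rfl]
    have : t ^ 2 / (2 * ε) - (ε * σ) ^ 2 / (2 * ε) - σ * (t - ε * σ)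
        = (t - ε * σ) ^ 2 / (2 * ε) := by field_simp; ring
    rw [this, abs_of_nonneg (by positivity)]
  · rw [if_pos ht, if_neg (not_le.mpr hr')]
    have : t ^ 2 / (2 * ε) - (σ * r₀ - ε * σ ^ 2 / 2) - σ * (t - r₀)
        = (t - ε * σ) ^ 2 / (2 * ε) := by field_simp; ring
    rw [this, abs_of_nonneg (by positivity), div_le_div_iff_of_pos_right (by positivity)]
    nlinarith [mul_nonneg (sub_nonneg.mpr hr'.le) (sub_nonneg.mpr (ht.trans hr'.le))]
  · have hr0 : r₀ = ε * σ := le_antisymm hr' hr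
    subst hr0
    rw [if_neg (not_le.mpr ht), if_pos le_rfl]
    have : σ * t - ε * σ ^ 2 / 2 - (ε * σ) ^ 2 / (2 * ε) - σ * (t - ε * σ) = 0 := by
      field_simp; ring
    rw [this, abs_zero]
    positivity
  · rw [if_neg (not_le.mpr ht), if_neg (not_le.mpr hr')]
    have : σ * t - ε * σ ^ 2 / 2 - (σ * r₀ - ε * σ ^ 2 / 2) - σ * (t - r₀) = 0 := by ring
    rw [this, abs_zero]
    positivity

private lemma hasDerivAt_phiMY (ε σ : ℝ) (hε : 0 < ε) (hσ : 0 < σ) {r₀ : ℝ}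
    (hr : ε * σ ≤ r₀) : HasDerivAt (phiMY ε σ) σ r₀ := by
  rw [hasDerivAt_iff_isLittleO, Asymptotics.isLittleO_iff]
  intro c hc
  have hmem : ∀ᶠ t in nhds r₀, |t - r₀| ≤ 2 * ε * c := by
    filter_upwards [Metric.ball_mem_nhds r₀ (by positivity : (0:ℝ) < 2 * ε * c)] with t ht
    rw [Metric.mem_ball, Real.dist_eq] at ht
    exact ht.le
  filter_upwards [hmem] with t ht
  have hb := phiMY_bound ε σ hε hσ hr t
  have h1 : ‖phiMY ε σ t - phiMY ε σ r₀ - (t - r₀) • σ‖ ≤ (t - r₀) ^ 2 / (2 * ε) := by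
    rw [Real.norm_eq_abs, smul_eq_mul, mul_comm]
    exact hb
  refine h1.trans ?_
  rw [Real.norm_eq_abs, div_le_iff₀ (by positivity)]
  nlinarith [mul_le_mul_of_nonneg_left ht (abs_nonneg (t - r₀)), sq_abs (t - r₀),
    abs_nonneg (t - r₀)]

private lemma hasFDerivAt_norm' (x : E) (hx : x ≠ 0) :
    HasFDerivAt (fun y : E => ‖y‖) (innerSL ℝ (‖x‖⁻¹ • x)) x := by
  have hxn : (0 : ℝ) < ‖x‖ := norm_pos_iff.mpr hx
  have h1 : HasFDerivAt (fun y : E => (inner ℝ y y : ℝ))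
      ((fderivInnerCLM ℝ (x, x)).comp ((ContinuousLinearMap.id ℝ E).prod
        (ContinuousLinearMap.id ℝ E))) x :=
    (hasFDerivAt_id x).inner ℝ (hasFDerivAt_id x)
  have hinner : (inner ℝ x x : ℝ) = ‖x‖ ^ 2 := real_inner_self_eq_norm_sq x
  have h2 : HasDerivAt Real.sqrt (1 / (2 * Real.sqrt (inner ℝ x x : ℝ))) (inner ℝ x x : ℝ) :=
    Real.hasDerivAt_sqrt (by rw [hinner]; positivity)
  have h3 := h2.comp_hasFDerivAt_of_eq x h1 rfl
  have hfun : (Real.sqrt ∘ fun y : E => (inner ℝ y y : ℝ)) = fun y : E => ‖y‖ := by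
    funext y
    simp [Function.comp, real_inner_self_eq_norm_sq, Real.sqrt_sq (norm_nonneg y)]
  rw [hfun] at h3
  refine h3.congr_fderiv ?_
  symm
  ext v
  rw [innerSL_apply_apply, real_inner_smul_left]
  rw [ContinuousLinearMap.smul_apply, ContinuousLinearMap.comp_apply,
    ContinuousLinearMap.prod_apply, fderivInnerCLM_apply, ContinuousLinearMap.id_apply,
    hinner, Real.sqrt_sq (norm_nonneg x)]
  rw [real_inner_comm v x]
  field_simp
  rw [smul_eq_mul, one_add_one_eq_two]
  field_simp

end Aux

/-- the Moreau–Yosida regularization `h_{ε,σ}` is Fréchet differentiable at every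
point `R`, with gradient `R/ε` when `‖R‖ ≤ εσ` and `σ R/‖R‖` when `‖R‖ > εσ`. -/
theorem stmt_2 {E : Type*} [NormedAddCommGroup E] [InnerProductSpace ℝ E]
    (ε σ : ℝ) (hε : 0 < ε) (hσ : 0 < σ) (R : E) :
    HasFDerivAt (fun R' : E => ⨅ S : E, (σ * ‖S‖ + ‖S - R'‖ ^ 2 / (2 * ε)))
      (innerSL ℝ (if ‖R‖ ≤ ε * σ then ε⁻¹ • R else (σ / ‖R‖) • R)) R := by
  have hfun : (fun R' : E => ⨅ S : E, (σ * ‖S‖ + ‖S - R'‖ ^ 2 / (2 * ε)))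
      = fun R' : E => phiMY ε σ ‖R'‖ := funext fun R' => iInf_eq_phiMY ε σ hε hσ R'
  rw [hfun]
  rcases lt_or_ge ‖R‖ (ε * σ) with h | h
  · -- quadratic region
    rw [if_pos h.le]
    have h1 : HasFDerivAt (fun y : E => (inner ℝ y y : ℝ))
        ((fderivInnerCLM ℝ (R, R)).comp ((ContinuousLinearMap.id ℝ E).prod
          (ContinuousLinearMap.id ℝ E))) R :=
      (hasFDerivAt_id R).inner ℝ (hasFDerivAt_id R)
    have h2 := h1.const_mul ((2 * ε)⁻¹)
    have hq : HasFDerivAt (fun y : E => ‖y‖ ^ 2 / (2 * ε)) (innerSL ℝ (ε⁻¹ • R)) R := by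
      have hf2 : (fun y : E => (2 * ε)⁻¹ * (inner ℝ y y : ℝ)) = fun y : E => ‖y‖ ^ 2 / (2 * ε) := by
        funext y; rw [real_inner_self_eq_norm_sq, inv_mul_eq_div]
      rw [hf2] at h2
      refine h2.congr_fderiv ?_
      symm
      ext v
      rw [innerSL_apply_apply, real_inner_smul_left]
      rw [ContinuousLinearMap.smul_apply, ContinuousLinearMap.comp_apply,
        ContinuousLinearMap.prod_apply, fderivInnerCLM_apply, ContinuousLinearMap.id_apply]
      rw [real_inner_comm v R]
      field_simp
      rw [smul_eq_mul, one_add_one_eq_two]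
      field_simp
    refine hq.congr_of_eventuallyEq ?_
    have hopen : {y : E | ‖y‖ < ε * σ} ∈ nhds R :=
      (isOpen_lt continuous_norm continuous_const).mem_nhds h
    filter_upwards [hopen] with y hy
    simp only [phiMY, if_pos (le_of_lt hy)]
  · -- linear / boundary region
    have hx : R ≠ 0 := by
      intro h0
      rw [h0, norm_zero] at h
      nlinarith
    have hc := (hasDerivAt_phiMY ε σ hε hσ h).comp_hasFDerivAt R (hasFDerivAt_norm' R hx)
    have hxn : (0 : ℝ) < ‖R‖ := norm_pos_iff.mpr hx
    refine hc.congr_fderiv ?_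
    symm
    ext v
    rw [innerSL_apply_apply, ContinuousLinearMap.smul_apply, innerSL_apply_apply, real_inner_smul_left,
      smul_eq_mul]
    by_cases hif : ‖R‖ ≤ ε * σ
    · have heq : ‖R‖ = ε * σ := le_antisymm hif h
      rw [if_pos hif, real_inner_smul_left, heq]
      field_simp
    · rw [if_neg hif, real_inner_smul_left]
      field_simp
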